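/- Let γ > 0 and let ξ be a random variable with Beta(1, γ) distribution (density γ(1−x)^{γ−1} on [0,1]). Then for all u ≥ 0, P(log((1+√ξ)/(1−√ξ)) > u) = sech(u/2)^{2γ}. -/

import Mathlib

open MeasureTheory

/-- The Beta(1,γ) distribution: density `γ (1-x)^(γ-1)` on `[0,1]` w.r.t. Lebesgue. -/
noncomputable def betaOneGamma (γ : ℝ) : Measure ℝ :=
  volume.withDensity fun x =>
    ENNReal.ofReal (Set.indicator (Set.Icc (0 : ℝ) 1) (fun y => γ * (1 - y) ^ (γ - 1)) x)

lemma key_set (u : ℝ) (hu : 0 ≤ u) :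
    Set.Icc (0:ℝ) 1 ∩ {x | u < Real.log ((1 + Real.sqrt x) / (1 - Real.sqrt x))} =
      Set.Ioo (((Real.exp u - 1) / (Real.exp u + 1)) ^ 2) 1 := by
  have hE1 : (1:ℝ) ≤ Real.exp u := by simpa using Real.exp_le_exp.2 hu
  have hE0 : (0:ℝ) < Real.exp u := Real.exp_pos u
  set E := Real.exp u with hE
  set t := (E - 1) / (E + 1) with ht
  have ht0 : 0 ≤ t := by
    apply div_nonneg <;> linarith
  have ht1 : t < 1 := by
    rw [div_lt_one (by linarith)]; linarith
  ext x
  simp only [Set.mem_inter_iff, Set.mem_Icc, Set.mem_setOf_eq, Set.mem_Ioo]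
  constructor
  · rintro ⟨⟨hx0, hx1⟩, hlt⟩
    have hx1' : x < 1 := by
      rcases lt_or_eq_of_le hx1 with h | h
      · exact h
      · exfalso
        rw [h] at hlt
        simp [Real.sqrt_one] at hlt
        linarith
    have hs0 : 0 ≤ Real.sqrt x := Real.sqrt_nonneg x
    have hs1 : Real.sqrt x < 1 := by
      have := Real.sqrt_lt_sqrt hx0 hx1'
      simpa using this
    set s := Real.sqrt x with hs
    have hr0 : 0 < (1 + s) / (1 - s) := by
      apply div_pos <;> linarith
    have hEr : E < (1 + s) / (1 - s) := by
      have := Real.exp_lt_exp.2 hlt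
      rwa [Real.exp_log hr0] at this
    have hst : t < s := by
      rw [lt_div_iff₀ (by linarith)] at hEr
      rw [ht, div_lt_iff₀ (by linarith)]
      nlinarith
    have hxs : x = s ^ 2 := (Real.sq_sqrt hx0).symm
    refine ⟨?_, hx1'⟩
    rw [hxs]
    exact pow_lt_pow_left₀ hst ht0 (by norm_num)
  · rintro ⟨ha, hx1⟩
    have hx0 : 0 ≤ x := le_trans (sq_nonneg t) ha.le
    have hs0 : 0 ≤ Real.sqrt x := Real.sqrt_nonneg x
    have hs1 : Real.sqrt x < 1 := by
      have := Real.sqrt_lt_sqrt hx0 hx1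
      simpa using this
    set s := Real.sqrt x with hs
    have hst : t < s := by
      have := Real.sqrt_lt_sqrt (sq_nonneg t) ha
      rwa [Real.sqrt_sq ht0] at this
    have hr0 : 0 < (1 + s) / (1 - s) := by
      apply div_pos <;> linarith
    have hEr : E < (1 + s) / (1 - s) := by
      rw [lt_div_iff₀ (by linarith)]
      rw [ht, div_lt_iff₀ (by linarith)] at hst
      nlinarith
    refine ⟨⟨hx0, hx1.le⟩, ?_⟩
    have := Real.log_lt_log hE0 hEr
    rwa [hE, Real.log_exp] at this

theorem beta_log_tail {Ω : Type*} [MeasurableSpace Ω] (ℙ : Measure Ω) [IsProbabilityMeasure ℙ]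
    (γ : ℝ) (hγ : 0 < γ) (X : Ω → ℝ) (hX : Measurable X)
    (hlaw : Measure.map X ℙ = betaOneGamma γ) (u : ℝ) (hu : 0 ≤ u) :
    ℙ {ω | u < Real.log ((1 + Real.sqrt (X ω)) / (1 - Real.sqrt (X ω)))} =
      ENNReal.ofReal ((1 / Real.cosh (u / 2)) ^ (2 * γ)) := by
  set a := ((Real.exp u - 1) / (Real.exp u + 1)) ^ 2 with hadef
  have hE1 : (1:ℝ) ≤ Real.exp u := by simpa using Real.exp_le_exp.2 hu
  have ha0 : 0 ≤ a := sq_nonneg _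
  have ha1 : a < 1 := by
    have h1 : (Real.exp u - 1) / (Real.exp u + 1) < 1 := by
      rw [div_lt_one (by linarith)]; linarith
    have h0 : 0 ≤ (Real.exp u - 1) / (Real.exp u + 1) := by
      apply div_nonneg <;> linarith
    nlinarith
  -- measurability of the tail set
  have hm : Measurable fun x : ℝ => Real.log ((1 + Real.sqrt x) / (1 - Real.sqrt x)) :=
    Real.measurable_log.comp ((measurable_const.add Real.continuous_sqrt.measurable).div
      (measurable_const.sub Real.continuous_sqrt.measurable))
  have hT : MeasurableSet {x : ℝ | u < Real.log ((1 + Real.sqrt x) / (1 - Real.sqrt x))} :=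
    measurableSet_lt measurable_const hm
  have h1 : ℙ {ω | u < Real.log ((1 + Real.sqrt (X ω)) / (1 - Real.sqrt (X ω)))}
      = betaOneGamma γ {x : ℝ | u < Real.log ((1 + Real.sqrt x) / (1 - Real.sqrt x))} := by
    rw [← hlaw, Measure.map_apply hX hT]; rfl
  rw [h1, betaOneGamma, withDensity_apply _ hT]
  have hswap : (fun x : ℝ => ENNReal.ofReal
      ((Set.Icc (0:ℝ) 1).indicator (fun y => γ * (1 - y) ^ (γ - 1)) x)) =
      (Set.Icc (0:ℝ) 1).indicator (fun y => ENNReal.ofReal (γ * (1 - y) ^ (γ - 1))) := by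
    ext x
    by_cases hx : x ∈ Set.Icc (0:ℝ) 1 <;> simp [hx]
  simp only [hswap]
  rw [lintegral_indicator measurableSet_Icc,
    Measure.restrict_restrict measurableSet_Icc, key_set u hu, ← hadef,
    Measure.restrict_congr_set Ioo_ae_eq_Ioc]
  -- integrability
  have hint : IntervalIntegrable (fun x : ℝ => γ * (1 - x) ^ (γ - 1)) volume a 1 := by
    have h := (intervalIntegral.intervalIntegrable_rpow' (a := 1 - a) (b := 0) (r := γ - 1)
      (by linarith)).comp_sub_left 1
    simpa using h.const_mul γ
  have hintOn : IntegrableOn (fun x : ℝ => γ * (1 - x) ^ (γ - 1)) (Set.Ioc a 1) volume := by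
    rwa [intervalIntegrable_iff_integrableOn_Ioc_of_le ha1.le] at hint
  have hnn : 0 ≤ᵐ[volume.restrict (Set.Ioc a 1)] fun x : ℝ => γ * (1 - x) ^ (γ - 1) := by
    filter_upwards [ae_restrict_mem measurableSet_Ioc] with x hx
    have : 0 ≤ (1 - x) ^ (γ - 1) := Real.rpow_nonneg (by linarith [hx.2]) _
    positivity
  rw [← ofReal_integral_eq_lintegral_ofReal hintOn hnn]
  congr 1
  have hIcalc : ∫ x in Set.Ioc a 1, γ * (1 - x) ^ (γ - 1) = (1 - a) ^ γ := by
    rw [← intervalIntegral.integral_of_le ha1.le]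
    rw [intervalIntegral.integral_const_mul]
    rw [intervalIntegral.integral_comp_sub_left (fun x : ℝ => x ^ (γ - 1)) 1]
    rw [integral_rpow (Or.inl (by linarith))]
    simp only [sub_self, sub_add_cancel]
    rw [Real.zero_rpow hγ.ne']
    field_simp
    rw [sub_zero]
  rw [hIcalc]
  -- final identity: (1 - a) ^ γ = (1 / cosh (u/2)) ^ (2 * γ)
  have hc0 : 0 < Real.cosh (u / 2) := Real.cosh_pos _
  have hkey : 1 - a = (1 / Real.cosh (u / 2)) ^ (2:ℝ) := by
    have he : Real.exp (u / 2) * Real.exp (u / 2) = Real.exp u := by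
      rw [← Real.exp_add]; ring_nf
    have he0 : 0 < Real.exp (u / 2) := Real.exp_pos _
    rw [Real.rpow_two]
    rw [Real.cosh_eq]
    rw [hadef]
    rw [Real.exp_neg, show Real.exp u = Real.exp (u/2) * Real.exp (u/2) from he.symm]
    field_simp
    ring
  rw [hkey, ← Real.rpow_mul (by positivity)]
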